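/- Let a > 0 be real, Ω ⊆ ℂ open, h, F holomorphic on Ω with F′ nonvanishing, and let u(x,y,z) = log( 4a·(z+h)(z+h̄)·|F′|² / (1 + a|F|²)² ) on U = {(x,y,z) : x+iy ∈ Ω, z + h(x+iy) ≠ 0}, which solves the SU(∞) Toda field equation. Then for any holomorphic function f on Ω, the smooth real-valued function w(x,y,z) = f/(2(z+h)) + f̄/(2(z+h̄)) (with f, h evaluated at x+iy and bars denoting complex conjugation) satisfies the abelian monopole equation w_xx + w_yy + (e^u w)_zz = 0 on U. -/

import Mathlib

open Complex

lemma harm2 {V : Set ℂ} (hV : IsOpen V) {g : ℂ → ℂ} (hg : DifferentiableOn ℂ g V)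
    (w : ℝ → ℝ → ℝ → ℝ) (z : ℝ)
    (hwg : ∀ x y : ℝ, (x:ℂ) + y * Complex.I ∈ V → w x y z = (g ((x:ℂ) + y * Complex.I)).re)
    {x y : ℝ} (hmem : (x:ℂ) + y * Complex.I ∈ V) :
    (deriv (fun t => deriv (fun s => w s y z) t) x) +
    (deriv (fun t => deriv (fun s => w x s z) t) y) = 0 := by
  have hA : AnalyticOnNhd ℂ g V := hg.analyticOnNhd hV
  set g1 := deriv g with hg1
  have hA1 : AnalyticOnNhd ℂ g1 V := hA.deriv
  set g2 := deriv g1 with hg2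
  have hd : ∀ ζ ∈ V, HasDerivAt g (g1 ζ) ζ := fun ζ hζ => ((hA ζ hζ).differentiableAt).hasDerivAt
  have hd1 : ∀ ζ ∈ V, HasDerivAt g1 (g2 ζ) ζ := fun ζ hζ => ((hA1 ζ hζ).differentiableAt).hasDerivAt
  have hxS : IsOpen {t : ℝ | (t:ℂ) + y*Complex.I ∈ V} :=
    hV.preimage (Complex.continuous_ofReal.add continuous_const)
  have hyS : IsOpen {t : ℝ | (x:ℂ) + t*Complex.I ∈ V} :=
    hV.preimage (continuous_const.add (Complex.continuous_ofReal.mul continuous_const))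
  have keyx : ∀ (G G' : ℂ → ℂ), (∀ ζ ∈ V, HasDerivAt G (G' ζ) ζ) →
      ∀ t : ℝ, (t:ℂ) + y*Complex.I ∈ V →
      HasDerivAt (fun s : ℝ => (G ((s:ℂ) + y*Complex.I)).re) ((G' ((t:ℂ)+y*Complex.I)).re) t := by
    intro G G' hG t ht
    have h1 : HasDerivAt (fun s : ℂ => G (s + y*Complex.I)) (G' ((t:ℂ)+y*Complex.I)) (t:ℂ) := by
      simpa [Function.comp_def] using (hG _ ht).comp (t:ℂ) ((hasDerivAt_id ((t:ℂ))).add_const ((y:ℂ)*Complex.I))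
    exact h1.real_of_complex
  have keyy : ∀ (G G' : ℂ → ℂ), (∀ ζ ∈ V, HasDerivAt G (G' ζ) ζ) →
      ∀ t : ℝ, (x:ℂ) + t*Complex.I ∈ V →
      HasDerivAt (fun s : ℝ => (G ((x:ℂ) + s*Complex.I)).re)
        ((G' ((x:ℂ)+t*Complex.I) * Complex.I).re) t := by
    intro G G' hG t ht
    have h1 : HasDerivAt (fun s : ℂ => G ((x:ℂ) + s*Complex.I))
        (G' ((x:ℂ)+t*Complex.I) * Complex.I) (t:ℂ) := by
      simpa [Function.comp_def] using (hG _ ht).comp (t:ℂ)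
        (((hasDerivAt_id ((t:ℂ))).mul_const Complex.I).const_add (x:ℂ))
    exact h1.real_of_complex
  have keyy2 : ∀ t : ℝ, (x:ℂ) + t*Complex.I ∈ V →
      HasDerivAt (fun s : ℝ => (g1 ((x:ℂ) + s*Complex.I) * Complex.I).re)
        ((g2 ((x:ℂ)+t*Complex.I) * Complex.I * Complex.I).re) t := by
    intro t ht
    have h1 : HasDerivAt (fun s : ℂ => g1 ((x:ℂ) + s*Complex.I) * Complex.I)
        (g2 ((x:ℂ)+t*Complex.I) * Complex.I * Complex.I) (t:ℂ) := by
      have := ((hd1 _ ht).comp (t:ℂ)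
        (((hasDerivAt_id ((t:ℂ))).mul_const Complex.I).const_add (x:ℂ))).mul_const Complex.I
      simpa using this
    exact h1.real_of_complex
  have hx1 : deriv (fun t => deriv (fun s => w s y z) t) x = (g2 ((x:ℂ)+y*Complex.I)).re := by
    have e1 : (fun t : ℝ => deriv (fun s => w s y z) t) =ᶠ[nhds x]
        (fun t => (g1 ((t:ℂ)+y*Complex.I)).re) := by
      filter_upwards [hxS.mem_nhds hmem] with t ht
      have e2 : (fun s : ℝ => w s y z) =ᶠ[nhds t] (fun s => (g ((s:ℂ)+y*Complex.I)).re) := by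
        filter_upwards [hxS.mem_nhds ht] with s hs
        exact hwg s y hs
      rw [e2.deriv_eq]
      exact (keyx g g1 hd t ht).deriv
    rw [e1.deriv_eq]
    exact (keyx g1 g2 hd1 x hmem).deriv
  have hy1 : deriv (fun t => deriv (fun s => w x s z) t) y
      = (g2 ((x:ℂ)+y*Complex.I) * Complex.I * Complex.I).re := by
    have e1 : (fun t : ℝ => deriv (fun s => w x s z) t) =ᶠ[nhds y]
        (fun t => (g1 ((x:ℂ)+t*Complex.I) * Complex.I).re) := by
      filter_upwards [hyS.mem_nhds hmem] with t ht
      have e2 : (fun s : ℝ => w x s z) =ᶠ[nhds t] (fun s => (g ((x:ℂ)+s*Complex.I)).re) := by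
        filter_upwards [hyS.mem_nhds ht] with s hs
        exact hwg x s hs
      rw [e2.deriv_eq]
      exact (keyy g g1 hd t ht).deriv
    rw [e1.deriv_eq]
    exact (keyy2 y hmem).deriv
  rw [hx1, hy1]
  have : g2 ((x:ℂ)+y*Complex.I) * Complex.I * Complex.I = - g2 ((x:ℂ)+y*Complex.I) := by
    rw [mul_assoc, Complex.I_mul_I, mul_neg_one]
  rw [this, Complex.neg_re]; ring



/-- Partial derivative in the first variable of a function of three real variables. -/
noncomputable def pdx (f : ℝ → ℝ → ℝ → ℝ) : ℝ → ℝ → ℝ → ℝ :=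
  fun x y z => deriv (fun t => f t y z) x

/-- Partial derivative in the second variable. -/
noncomputable def pdy (f : ℝ → ℝ → ℝ → ℝ) : ℝ → ℝ → ℝ → ℝ :=
  fun x y z => deriv (fun t => f x t z) y

/-- Partial derivative in the third variable. -/
noncomputable def pdz (f : ℝ → ℝ → ℝ → ℝ) : ℝ → ℝ → ℝ → ℝ :=
  fun x y z => deriv (fun t => f x y t) z

/-- for the explicit Toda solution
`u = log( 4a·(z+h)(z+h̄)·|F′|² / (1 + a|F|²)² )` on
`U = {(x,y,z) : x+iy ∈ Ω, z + h(x+iy) ≠ 0}`, and for any holomorphic `f` on `Ω`, the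
real-valued function `w = f/(2(z+h)) + f̄/(2(z+h̄))` (expressed as the real part of the
corresponding complex expression) satisfies the abelian monopole equation
`w_xx + w_yy + (e^u w)_zz = 0` on `U`. -/
theorem strachan_monopoles
    (a : ℝ) (ha : 0 < a)
    (Ω : Set ℂ) (hΩ : IsOpen Ω)
    (h F F' : ℂ → ℂ)
    (hh : DifferentiableOn ℂ h Ω)
    (hF : ∀ ζ ∈ Ω, HasDerivAt F (F' ζ) ζ)
    (hF' : ∀ ζ ∈ Ω, F' ζ ≠ 0)
    (u : ℝ → ℝ → ℝ → ℝ)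
    (hu : ∀ x y z : ℝ,
      u x y z = Real.log (4 * a * Complex.normSq ((z : ℂ) + h (x + y * Complex.I)) *
        (‖F' (x + y * Complex.I)‖)^2 /
        (1 + a * (‖F (x + y * Complex.I)‖)^2)^2))
    (f : ℂ → ℂ) (hf : DifferentiableOn ℂ f Ω)
    (w : ℝ → ℝ → ℝ → ℝ)
    (hw : ∀ x y z : ℝ,
      w x y z = (f (x + y * Complex.I) / (2 * ((z : ℂ) + h (x + y * Complex.I))) +
        (starRingEnd ℂ) (f (x + y * Complex.I)) /
          (2 * ((z : ℂ) + (starRingEnd ℂ) (h (x + y * Complex.I))))).re) :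
    ∀ x y z : ℝ, (x + y * Complex.I) ∈ Ω → (z : ℂ) + h (x + y * Complex.I) ≠ 0 →
      pdx (pdx w) x y z + pdy (pdy w) x y z +
        pdz (pdz (fun x' y' z' => Real.exp (u x' y' z') * w x' y' z')) x y z = 0 := by
  intro x y z hxy hz
  set ζ : ℂ := (x:ℂ) + (y:ℂ) * Complex.I with hζdef
  set H : ℂ := h ζ with hHdef
  set q : ℂ := f ζ with hqdef
  -- Part B: the z-part vanishes
  set c : ℝ := 4*a*(‖F' ζ‖)^2 / (1 + a*(‖F ζ‖)^2)^2 with hc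
  have hF'pos : (0:ℝ) < ‖F' ζ‖ := by
    simpa using (norm_pos_iff.mpr (hF' ζ hxy))
  have hTopen : IsOpen {t : ℝ | (t:ℂ) + H ≠ 0} :=
    isOpen_compl_singleton.preimage (Complex.continuous_ofReal.add continuous_const)
  have haff : ∀ t : ℝ, (t:ℂ) + H ≠ 0 →
      Real.exp (u x y t) * w x y t = (c * q.re) * t + c * (q * (starRingEnd ℂ) H).re := by
    intro t hK
    set K : ℂ := (t:ℂ) + H with hKdef
    have hnormSq : 0 < Complex.normSq K := Complex.normSq_pos.2 hK
    have hexp : Real.exp (u x y t)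
        = 4*a*Complex.normSq K*(‖F' ζ‖)^2/(1+a*(‖F ζ‖)^2)^2 := by
      rw [hu x y t]
      exact Real.exp_log (by positivity)
    have hconjK : (t:ℂ) + (starRingEnd ℂ) H = (starRingEnd ℂ) K := by
      simp [hKdef, Complex.conj_ofReal]
    have hwv : w x y t = (q/(2*K) + (starRingEnd ℂ) q/(2*(starRingEnd ℂ) K)).re := by
      rw [hw x y t, hconjK]
    have hmulconj : (K * (starRingEnd ℂ) K) = (Complex.normSq K : ℂ) := Complex.mul_conj K
    have hKc : (starRingEnd ℂ) K ≠ 0 := by simpa using hK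
    have key : ((4*a*Complex.normSq K*(‖F' ζ‖)^2/(1+a*(‖F ζ‖)^2)^2 : ℝ) : ℂ) *
        (q/(2*K) + (starRingEnd ℂ) q/(2*(starRingEnd ℂ) K)) =
        (c:ℂ) * (q * (starRingEnd ℂ) K + (starRingEnd ℂ) q * K) / 2 := by
      have hA : ((4*a*Complex.normSq K*(‖F' ζ‖)^2/(1+a*(‖F ζ‖)^2)^2 : ℝ) : ℂ)
          = (c:ℂ) * (K * (starRingEnd ℂ) K) := by
        rw [hmulconj, hc]; push_cast; ring
      rw [hA]; field_simp
    rw [hexp, hwv, ← Complex.re_ofReal_mul, key]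
    have h2 : q * (starRingEnd ℂ) K + (starRingEnd ℂ) q * K
        = ((2 * (q * (starRingEnd ℂ) K).re : ℝ) : ℂ) := by
      rw [show (starRingEnd ℂ) q * K = (starRingEnd ℂ) (q * (starRingEnd ℂ) K) by simp [map_mul],
        Complex.add_conj]
    rw [h2]
    have h3 : (q * (starRingEnd ℂ) K).re = q.re * t + (q * (starRingEnd ℂ) H).re := by
      rw [hKdef]
      simp [map_add, Complex.conj_ofReal, mul_add, Complex.add_re, Complex.mul_re,
        Complex.ofReal_re, Complex.ofReal_im]
    rw [h3]
    have h4 : ((c:ℂ) * ((2 * (q.re * t + (q * (starRingEnd ℂ) H).re) : ℝ) : ℂ) / 2)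
        = ((c * (q.re * t + (q * (starRingEnd ℂ) H).re) : ℝ) : ℂ) := by
      push_cast; ring
    rw [h4, Complex.ofReal_re]; ring
  have hz2 : pdz (pdz (fun x' y' z' => Real.exp (u x' y' z') * w x' y' z')) x y z = 0 := by
    have pd1 : (fun t : ℝ => pdz (fun x' y' z' => Real.exp (u x' y' z') * w x' y' z') x y t)
        =ᶠ[nhds z] (fun _ => c * q.re) := by
      filter_upwards [hTopen.mem_nhds hz] with t ht
      have e2 : (fun s : ℝ => Real.exp (u x y s) * w x y s) =ᶠ[nhds t]
          (fun s => (c * q.re) * s + c * (q * (starRingEnd ℂ) H).re) := by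
        filter_upwards [hTopen.mem_nhds ht] with s hs
        exact haff s hs
      show deriv (fun s => Real.exp (u x y s) * w x y s) t = _
      rw [e2.deriv_eq]
      simpa using (((hasDerivAt_id t).const_mul (c*q.re)).add_const
        (c * (q * (starRingEnd ℂ) H).re)).deriv
    show deriv _ z = 0
    rw [pd1.deriv_eq]
    exact deriv_const _ _
  -- Part A: the (x,y)-part is harmonic
  set V : Set ℂ := Ω ∩ (fun s => (z:ℂ) + h s) ⁻¹' {0}ᶜ with hVdef
  have hVopen : IsOpen V :=
    (continuousOn_const.add hh.continuousOn).isOpen_inter_preimage hΩ isOpen_compl_singleton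
  have hg : DifferentiableOn ℂ (fun s => f s / ((z:ℂ) + h s)) V :=
    (hf.mono Set.inter_subset_left).div
      ((differentiableOn_const _).add (hh.mono Set.inter_subset_left)) (fun s hs => hs.2)
  have hwg : ∀ x' y' : ℝ, (x':ℂ) + (y':ℂ)*Complex.I ∈ V →
      w x' y' z = ((fun s => f s / ((z:ℂ) + h s)) ((x':ℂ)+(y':ℂ)*Complex.I)).re := by
    intro x' y' hs
    set s : ℂ := (x':ℂ) + (y':ℂ)*Complex.I with hsdef
    have hK : (z:ℂ) + h s ≠ 0 := hs.2
    rw [hw]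
    have h1 : (starRingEnd ℂ) (f s) / (2*((z:ℂ) + (starRingEnd ℂ) (h s))) =
        (starRingEnd ℂ) (f s / (2*((z:ℂ) + h s))) := by
      simp [map_div₀, map_mul, map_add, map_ofNat, Complex.conj_ofReal]
    rw [h1, Complex.add_conj]
    have h2 : f s / ((z:ℂ) + h s) = 2 * (f s / (2*((z:ℂ) + h s))) := by
      field_simp
    show _ = (f s / ((z:ℂ) + h s)).re
    rw [h2]
    simp [Complex.mul_re]
    rfl
  have hmemV : ζ ∈ V := ⟨hxy, hz⟩
  have hA0 := harm2 hVopen hg w z hwg hmemV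
  show deriv (fun t => pdx w t y z) x + deriv (fun t => pdy w x t z) y + _ = 0
  rw [hz2, add_zero]
  exact hA0
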